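/- arXiv:2001.05546 — 2 statements merged into one kernel-verified Lean document; each statement's English description precedes it below -/
import Mathlib

section
/- Define f(n,k) = Σ_{j∈ℤ} (−1)^j q^{j(3j−1)/2} [n choose k−j]_q [n choose k+j]_q. Then f(n,k) = [n choose k]_q for all n ≥ 0 and all k. -/
open LaurentPolynomial

/-- The Gaussian (q-)binomial coefficient `[n choose k]_q`, as a Laurent polynomial in `q`,
with the convention that it vanishes for `k < 0` or `k > n`.  Defined via the standard
Pascal-type recurrence `[n+1, k] = q^k [n, k] + [n, k-1]`. -/
noncomputable def qb : ℕ → ℤ → LaurentPolynomial ℤ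
  | 0, k => if k = 0 then 1 else 0
  | (n+1), k => T k * qb n k + qb n (k-1)

/-- The variable `q`. -/
noncomputable def q : LaurentPolynomial ℤ := T 1

/-- `f n k = Σ_{j∈ℤ} (−1)^j q^{j(3j−1)/2} [n choose k−j]_q [n choose k+j]_q`. -/
noncomputable def f (n : ℕ) (k : ℤ) : LaurentPolynomial ℤ :=
  ∑ᶠ j : ℤ, (-1 : LaurentPolynomial ℤ) ^ j.natAbs * T (j * (3 * j - 1) / 2) *
    qb n (k - j) * qb n (k + j)

/- auxiliary lemmas -/

/- helpers -/

noncomputable def w (j : ℤ) : LaurentPolynomial ℤ :=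
  (-1 : LaurentPolynomial ℤ) ^ j.natAbs * T (j * (3 * j - 1) / 2)

lemma f_def (n : ℕ) (k : ℤ) : f n k = ∑ᶠ j : ℤ, w j * qb n (k - j) * qb n (k + j) := rfl

lemma pent (j : ℤ) : ∃ m : ℤ, j * (3 * j - 1) = 2 * m := by
  rcases Int.even_or_odd j with ⟨t, ht⟩ | ⟨t, ht⟩
  · exact ⟨t * (3 * j - 1), by rw [ht]; ring⟩
  · exact ⟨j * (3 * t + 1), by rw [ht]; ring⟩

lemma sgn_succ (j : ℤ) : ((-1 : LaurentPolynomial ℤ)) ^ (j + 1).natAbs = -(-1) ^ j.natAbs := by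
  rcases Int.even_or_odd j with h | h
  · rw [(Int.natAbs_even.mpr h).neg_one_pow, (Int.natAbs_odd.mpr h.add_one).neg_one_pow]
  · rw [(Int.natAbs_odd.mpr h).neg_one_pow, (Int.natAbs_even.mpr h.add_one).neg_one_pow]; ring

lemma w_neg (j : ℤ) : w (-j) = w j * T j := by
  obtain ⟨m, hm⟩ := pent j
  have h1 : j * (3 * j - 1) / 2 = m := by rw [hm]; exact Int.mul_ediv_cancel_left _ two_ne_zero
  have h2 : -j * (3 * -j - 1) / 2 = m + j := by
    rw [show -j * (3 * -j - 1) = 2 * (m + j) by linear_combination hm]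
    exact Int.mul_ediv_cancel_left _ two_ne_zero
  simp only [w, h1, h2, Int.natAbs_neg, T_add]; ring

lemma w_one_sub (j : ℤ) : w (1 - j) = -w j * T (1 - 2 * j) := by
  obtain ⟨m, hm⟩ := pent j
  have h1 : j * (3 * j - 1) / 2 = m := by rw [hm]; exact Int.mul_ediv_cancel_left _ two_ne_zero
  have h2 : (1 - j) * (3 * (1 - j) - 1) / 2 = m + (1 - 2 * j) := by
    rw [show (1 - j) * (3 * (1 - j) - 1) = 2 * (m + (1 - 2 * j)) by linear_combination hm]
    exact Int.mul_ediv_cancel_left _ two_ne_zero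
  have h3 : ((-1 : LaurentPolynomial ℤ)) ^ (1 - j).natAbs = -(-1) ^ j.natAbs := by
    have h4 := sgn_succ (j - 1)
    rw [show j - 1 + 1 = j by ring] at h4
    rw [show (1 : ℤ) - j = -(j - 1) by ring, Int.natAbs_neg]
    linear_combination h4
  simp only [w, h1, h2, h3, T_add]; ring

lemma w_neg_one_sub (j : ℤ) : w (-1 - j) = -w j * T (4 * j + 2) := by
  obtain ⟨m, hm⟩ := pent j
  have h1 : j * (3 * j - 1) / 2 = m := by rw [hm]; exact Int.mul_ediv_cancel_left _ two_ne_zero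
  have h2 : (-1 - j) * (3 * (-1 - j) - 1) / 2 = m + (4 * j + 2) := by
    rw [show (-1 - j) * (3 * (-1 - j) - 1) = 2 * (m + (4 * j + 2)) by linear_combination hm]
    exact Int.mul_ediv_cancel_left _ two_ne_zero
  have h3 : ((-1 : LaurentPolynomial ℤ)) ^ (-1 - j).natAbs = -(-1) ^ j.natAbs := by
    rw [show (-1 : ℤ) - j = -(j + 1) by ring, Int.natAbs_neg, sgn_succ]
  simp only [w, h1, h2, h3, T_add]; ring
lemma T_inj {a b : ℤ} (h : (T a : LaurentPolynomial ℤ) = T b) : a = b :=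
  AddMonoidAlgebra.single_left_injective one_ne_zero h
lemma one_sub_T_ne (k : ℤ) (hk : k ≠ 0) : (1 : LaurentPolynomial ℤ) - T k ≠ 0 := by
  intro h
  have h1 : (T k : LaurentPolynomial ℤ) = T 0 := by rw [T_zero]; linear_combination -h
  exact hk (T_inj h1)
lemma two_ne : (2 : LaurentPolynomial ℤ) ≠ 0 := by
  intro h
  have h2 : Polynomial.toLaurent (2 : Polynomial ℤ) = (2 : LaurentPolynomial ℤ) := map_ofNat _ 2
  have h3 := Polynomial.toLaurent_injective (R := ℤ) (h2.trans (h.trans (map_zero _).symm))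
  norm_num at h3

lemma qb_neg (n : ℕ) : ∀ k : ℤ, k < 0 → qb n k = 0 := by
  induction n with
  | zero => intro k hk; simp only [qb]; rw [if_neg (by omega)]
  | succ n ih => intro k hk; simp only [qb]; rw [ih k hk, ih (k-1) (by omega)]; ring

lemma qb_gt (n : ℕ) : ∀ k : ℤ, (n : ℤ) < k → qb n k = 0 := by
  induction n with
  | zero => intro k hk; simp only [qb]; rw [if_neg (by omega)]
  | succ n ih =>
    intro k hk
    simp only [qb]
    rw [ih k (by push_cast at hk ⊢; omega), ih (k-1) (by push_cast at hk ⊢; omega)]; ring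

lemma qb_zero (n : ℕ) : qb n 0 = 1 := by
  induction n with
  | zero => simp [qb]
  | succ n ih => simp only [qb]; rw [ih, qb_neg n (0-1) (by omega)]; simp

lemma supp_aux2 (F : ℤ → LaurentPolynomial ℤ) (c₁ c₂ : ℤ) (n : ℕ)
    (h : ∀ j, qb n (c₁ - j) = 0 → qb n (c₂ - j) = 0 → F j = 0) :
    (Function.support F).Finite := by
  apply (Set.finite_Icc (min c₁ c₂ - n) (max c₁ c₂)).subset
  intro j hj
  simp only [Function.mem_support] at hj
  rw [Set.mem_Icc]
  by_contra hc
  rw [not_and_or, not_le, not_le] at hc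
  refine hj (h j ?_ ?_) <;> rcases hc with h' | h'
  · exact qb_gt n _ (by omega)
  · exact qb_neg n _ (by omega)
  · exact qb_gt n _ (by omega)
  · exact qb_neg n _ (by omega)

lemma finsum_anti (F : ℤ → LaurentPolynomial ℤ) (c : ℤ) (h : ∀ j, F (c - j) = -F j) :
    ∑ᶠ j, F j = 0 := by
  have h1 : ∑ᶠ j, F (c - j) = ∑ᶠ j, F j := by
    have h0 := finsum_comp_equiv (Equiv.subLeft c) (f := F)
    simpa [Equiv.subLeft] using h0
  have h2 : ∑ᶠ j, F (c - j) = -∑ᶠ j, F j := (finsum_congr h).trans (finsum_neg_distrib F)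
  have h4 : ∑ᶠ j, F j = -∑ᶠ j, F j := h1.symm.trans h2
  have h3 : (2 : LaurentPolynomial ℤ) * ∑ᶠ j, F j = 0 := by linear_combination h4
  rcases mul_eq_zero.mp h3 with h' | h'
  · exact absurd h' two_ne
  · exact h'

lemma qbR2 (n : ℕ) : ∀ k : ℤ, qb (n+1) k = qb n k + T ((n:ℤ)+1-k) * qb n (k-1) := by
  induction n with
  | zero =>
    intro k
    simp only [qb]
    rcases eq_or_ne k 0 with rfl | h0
    · norm_num
    · rcases eq_or_ne k 1 with rfl | h1
      · norm_num
      · simp [h0, sub_eq_zero, h1]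
  | succ n ih =>
    intro k
    have e1 : qb (n+1+1) k = T k * qb (n+1) k + qb (n+1) (k-1) := by simp only [qb]
    have hd1 : qb (n+1) k = T k * qb n k + qb n (k-1) := by simp only [qb]
    have hd2 : qb (n+1) (k-1) = T (k-1) * qb n (k-1) + qb n (k-1-1) := by simp only [qb]
    have hi1 := ih k
    have hi2 := ih (k-1)
    have t1 : (T (k + ((n:ℤ)+1-k)) : LaurentPolynomial ℤ) = T k * T ((n:ℤ)+1-k) := T_add _ _
    have t2 : (T (((n:ℤ)+1+1-k) + (k-1)) : LaurentPolynomial ℤ) = T ((n:ℤ)+1+1-k) * T (k-1) := T_add _ _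
    rw [e1]
    push_cast
    linear_combination (norm := ring_nf) T k * hi1 - hd1 + hi2 - T ((n:ℤ)+1+1-k) * hd2 - qb n (k-1) * t1 + qb n (k-1) * t2

noncomputable def PA (n : ℕ) (k j : ℤ) : LaurentPolynomial ℤ :=
  w j * T (k-j) * T (k+j) * qb n (k-j) * qb n (k+j)
noncomputable def PB (n : ℕ) (k j : ℤ) : LaurentPolynomial ℤ :=
  -(w j * T k * T (k+j) * qb n (k+j) * qb n (k-j))
noncomputable def PC (n : ℕ) (k j : ℤ) : LaurentPolynomial ℤ :=
  w j * T (k+j) * qb n (k+j) * qb n (k-j-1)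
noncomputable def PD (n : ℕ) (k j : ℤ) : LaurentPolynomial ℤ :=
  -(w j * T k * qb n (k+j-1) * qb n (k-j))
noncomputable def PE (n : ℕ) (k j : ℤ) : LaurentPolynomial ℤ :=
  w j * T (k-j) * qb n (k+j-1) * qb n (k-j)
noncomputable def PF (n : ℕ) (k j : ℤ) : LaurentPolynomial ℤ :=
  -(w j * T k * T ((n:ℤ)+1-(k-j)) * T (k+j) * qb n (k+j) * qb n (k-j-1))
noncomputable def PG (n : ℕ) (k j : ℤ) : LaurentPolynomial ℤ :=
  w j * qb n (k-1-j) * qb n (k-1+j)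
noncomputable def PH (n : ℕ) (k j : ℤ) : LaurentPolynomial ℤ :=
  -(w j * T k * T ((n:ℤ)+1-(k-j)) * qb n (k+j-1) * qb n (k-j-1))

lemma key (n : ℕ) (k : ℤ) :
    (1 - T k) * f (n+1) k = (1 - T ((n:ℤ)+1)) * f n (k-1) := by
  -- pointwise decomposition
  have e2 : ∀ j : ℤ, (1 - T k) * (w j * qb (n+1) (k-j) * qb (n+1) (k+j)) =
      (PA n k j + PB n k j) + (PC n k j + PD n k j) + PE n k j + PF n k j + PG n k j
        + PH n k j := by
    intro j
    have hd1 : qb (n+1) (k-j) = T (k-j) * qb n (k-j) + qb n (k-j-1) := by simp only [qb]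
    have hr : qb (n+1) (k-j) = qb n (k-j) + T ((n:ℤ)+1-(k-j)) * qb n (k-j-1) := qbR2 n (k-j)
    have hd3 : qb (n+1) (k+j) = T (k+j) * qb n (k+j) + qb n (k+j-1) := by simp only [qb]
    simp only [PA, PB, PC, PD, PE, PF, PG, PH]
    linear_combination (norm := ring_nf)
      (w j * qb (n+1) (k+j)) * hd1 - T k * w j * qb (n+1) (k+j) * hr
      + (w j * (T (k-j) * qb n (k-j) + qb n (k-j-1))
         - T k * w j * (qb n (k-j) + T ((n:ℤ)+1-(k-j)) * qb n (k-j-1))) * hd3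
  -- finiteness
  have FIN : ∀ F : ℤ → LaurentPolynomial ℤ,
      (∀ j, qb n (k - j) = 0 → qb n (k-1-j) = 0 → F j = 0) → (Function.support F).Finite :=
    fun F h => supp_aux2 F k (k-1) n h
  have finPA := FIN (fun j => PA n k j) (by
    intro j h0 h1; simp only [PA, h0]; ring)
  have finPB := FIN (fun j => PB n k j) (by
    intro j h0 h1; simp only [PB, h0]; ring)
  have finPC := FIN (fun j => PC n k j) (by
    intro j h0 h1
    have h1' : qb n (k - j - 1) = 0 := by rw [show k - j - 1 = k - 1 - j by ring]; exact h1
    simp only [PC, h1']; ring)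
  have finPD := FIN (fun j => PD n k j) (by
    intro j h0 h1; simp only [PD, h0]; ring)
  have finPE := FIN (fun j => PE n k j) (by
    intro j h0 h1; simp only [PE, h0]; ring)
  have finPF := FIN (fun j => PF n k j) (by
    intro j h0 h1
    have h1' : qb n (k - j - 1) = 0 := by rw [show k - j - 1 = k - 1 - j by ring]; exact h1
    simp only [PF, h1']; ring)
  have finPG := FIN (fun j => PG n k j) (by
    intro j h0 h1; simp only [PG, h1]; ring)
  have finPH := FIN (fun j => PH n k j) (by
    intro j h0 h1
    have h1' : qb n (k - j - 1) = 0 := by rw [show k - j - 1 = k - 1 - j by ring]; exact h1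
    simp only [PH, h1']; ring)
  have finAB := FIN (fun j => PA n k j + PB n k j) (by
    intro j h0 h1; simp only [PA, PB, h0]; ring)
  have finCD := FIN (fun j => PC n k j + PD n k j) (by
    intro j h0 h1
    have h1' : qb n (k - j - 1) = 0 := by rw [show k - j - 1 = k - 1 - j by ring]; exact h1
    simp only [PC, PD, h0, h1']; ring)
  have finABCD := FIN (fun j => (PA n k j + PB n k j) + (PC n k j + PD n k j)) (by
    intro j h0 h1
    have h1' : qb n (k - j - 1) = 0 := by rw [show k - j - 1 = k - 1 - j by ring]; exact h1
    simp only [PA, PB, PC, PD, h0, h1']; ring)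
  have finABCDE := FIN (fun j => (PA n k j + PB n k j) + (PC n k j + PD n k j) + PE n k j) (by
    intro j h0 h1
    have h1' : qb n (k - j - 1) = 0 := by rw [show k - j - 1 = k - 1 - j by ring]; exact h1
    simp only [PA, PB, PC, PD, PE, h0, h1']; ring)
  have finABCDEF := FIN (fun j => (PA n k j + PB n k j) + (PC n k j + PD n k j) + PE n k j
      + PF n k j) (by
    intro j h0 h1
    have h1' : qb n (k - j - 1) = 0 := by rw [show k - j - 1 = k - 1 - j by ring]; exact h1
    simp only [PA, PB, PC, PD, PE, PF, h0, h1']; ring)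
  have finABCDEFG := FIN (fun j => (PA n k j + PB n k j) + (PC n k j + PD n k j) + PE n k j
      + PF n k j + PG n k j) (by
    intro j h0 h1
    have h1' : qb n (k - j - 1) = 0 := by rw [show k - j - 1 = k - 1 - j by ring]; exact h1
    simp only [PA, PB, PC, PD, PE, PF, PG, h0, h1, h1']; ring)
  have fin0 : (Function.support fun j : ℤ => w j * qb (n+1) (k - j) * qb (n+1) (k + j)).Finite :=
    supp_aux2 _ k k (n+1) (by intro j h0 _; rw [h0]; ring)
  -- the six sums
  have hS1 : ∑ᶠ j, (PA n k j + PB n k j) = 0 := by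
    apply finsum_anti _ 0
    intro j
    simp only [PA, PB, zero_sub, w_neg, mul_T_assoc]
    ring_nf
  have hS2 : ∑ᶠ j, (PC n k j + PD n k j) = 0 := by
    apply finsum_anti _ 0
    intro j
    simp only [PC, PD, zero_sub, w_neg, mul_T_assoc]
    ring_nf
  have hS3 : ∑ᶠ j, PE n k j = 0 := by
    apply finsum_anti _ 1
    intro j
    simp only [PE, w_one_sub, mul_T_assoc]
    ring_nf
  have hS4 : ∑ᶠ j, PF n k j = 0 := by
    apply finsum_anti _ (-1)
    intro j
    simp only [PF, w_neg_one_sub, mul_T_assoc]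
    ring_nf
  have hS5 : ∑ᶠ j, PG n k j = f n (k-1) := rfl
  have hS6 : ∑ᶠ j, PH n k j = -(T ((n:ℤ)+1) * f n (k-1)) := by
    have hHpt : ∀ j : ℤ, PH n k (-j)
        = -(T ((n:ℤ)+1) * (w j * qb n (k-1-j) * qb n (k-1+j))) := by
      intro j
      simp only [PH, w_neg, mul_T_assoc]
      ring_nf
    calc ∑ᶠ j, PH n k j = ∑ᶠ j, PH n k (-j) := by
          rw [← finsum_comp_equiv (Equiv.neg ℤ) (f := PH n k)]
          simp [Equiv.neg_apply]
      _ = ∑ᶠ j, -(T ((n:ℤ)+1) * (w j * qb n (k-1-j) * qb n (k-1+j))) := finsum_congr hHpt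
      _ = -∑ᶠ j, T ((n:ℤ)+1) * (w j * qb n (k-1-j) * qb n (k-1+j)) := finsum_neg_distrib _
      _ = -(T ((n:ℤ)+1) * ∑ᶠ j, w j * qb n (k-1-j) * qb n (k-1+j)) := by
          rw [mul_finsum' _ _ (FIN _ (by intro j h0 h1; rw [h1]; ring))]
      _ = -(T ((n:ℤ)+1) * f n (k-1)) := rfl
  rw [f_def, mul_finsum' _ _ fin0, finsum_congr e2,
    finsum_add_distrib finABCDEFG finPH, finsum_add_distrib finABCDEF finPG,
    finsum_add_distrib finABCDE finPF, finsum_add_distrib finABCD finPE,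
    finsum_add_distrib finAB finCD]
  rw [hS1, hS2, hS3, hS4, hS5, hS6]
  ring

theorem stmt6 (n : ℕ) (k : ℤ) : f n k = qb n k := by
  induction n generalizing k with
  | zero =>
    rw [f_def]
    have hside : ∀ j : ℤ, j ≠ k → w j * qb 0 (k - j) * qb 0 (k + j) = 0 := by
      intro j hj
      have h0 : qb 0 (k - j) = 0 := by simp only [qb]; rw [if_neg (by omega)]
      rw [h0]; ring
    rw [finsum_eq_single _ k hside]
    rcases eq_or_ne k 0 with rfl | hk
    · norm_num [w, qb]
    · have h2 : qb 0 (k + k) = 0 := by simp only [qb]; rw [if_neg (by omega)]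
      have h3 : qb 0 k = 0 := by simp only [qb]; rw [if_neg hk]
      rw [h2, h3]; ring
  | succ n ih =>
    rcases eq_or_ne k 0 with rfl | hk
    · rw [f_def]
      have hside : ∀ j : ℤ, j ≠ 0 → w j * qb (n+1) (0 - j) * qb (n+1) (0 + j) = 0 := by
        intro j hj
        rcases lt_or_gt_of_ne hj with h | h
        · have h0 : qb (n+1) (0 + j) = 0 := qb_neg _ _ (by omega)
          rw [h0]; ring
        · have h0 : qb (n+1) (0 - j) = 0 := qb_neg _ _ (by omega)
          rw [h0]; ring
      rw [finsum_eq_single _ 0 hside]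
      have hw0 : w 0 = 1 := by norm_num [w]
      rw [show (0:ℤ) - 0 = 0 by ring, show (0:ℤ) + 0 = 0 by ring, qb_zero, hw0]; ring
    · have h1 := key n k
      rw [ih (k-1)] at h1
      have hd : qb (n+1) k = T k * qb n k + qb n (k-1) := by simp only [qb]
      have hr := qbR2 n k
      have tt : (T ((n:ℤ)+1) : LaurentPolynomial ℤ) = T k * T ((n:ℤ)+1-k) := by
        rw [← T_add]; ring_nf
      have h2 : (1 - T ((n:ℤ)+1)) * qb n (k-1) = (1 - T k) * qb (n+1) k := by
        linear_combination (norm := ring_nf) T k * hr - hd - qb n (k-1) * tt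
      rw [h2] at h1
      exact mul_left_cancel₀ (one_sub_T_ne k hk) h1
end

section
/- Bressoud's first identity: for all n ≥ 0, Σ_{k=0}^n q^{k²} [n choose k]_q = Σ_{j∈ℤ} (−1)^j q^{j(5j−1)/2} [2n choose n−2j]_q. -/
open LaurentPolynomial

lemma qb_zero_s8 (k : ℤ) : qb 0 k = if k = 0 then 1 else 0 := rfl

lemma qb_succ (m : ℕ) (k : ℤ) : qb (m+1) k = T k * qb m k + qb m (k-1) := rfl

lemma Tm {a b c : ℤ} (h : a + b = c) : (T a : LaurentPolynomial ℤ) * T b = T c := by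
  rw [← T_add, h]

lemma qb_eq_zero : ∀ (m : ℕ) {k : ℤ}, (k < 0 ∨ (m:ℤ) < k) → qb m k = 0
  | 0, k, h => by rw [qb_zero_s8, if_neg (by omega)]
  | (m+1), k, h => by
      rw [qb_succ, qb_eq_zero m (k := k) (by push_cast at h ⊢; omega),
        qb_eq_zero m (k := k-1) (by push_cast at h ⊢; omega), mul_zero, add_zero]

lemma qb_pascalB : ∀ (m : ℕ) (k : ℤ), qb (m+1) k = qb m k + T ((m:ℤ)+1-k) * qb m (k-1)
  | 0, k => by
      rcases eq_or_ne k 0 with rfl | h0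
      · simp [qb_succ, qb_zero_s8]
      rcases eq_or_ne k 1 with rfl | h1
      · norm_num [qb_succ, qb_zero_s8]
      · simp [qb_succ, qb_zero_s8, h0, h1, sub_eq_zero, (by omega : ¬ k - 1 = 0)]
  | (m+1), k => by
      have h1 : (T k : LaurentPolynomial ℤ) * T ((m:ℤ)+1-k) = T ((m:ℤ)+1) := Tm (by ring)
      have h2 : (T ((m:ℤ)+1+1-k) : LaurentPolynomial ℤ) * T (k-1) = T ((m:ℤ)+1) := Tm (by ring)
      calc qb (m+2) k = T k * qb (m+1) k + qb (m+1) (k-1) := qb_succ _ _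
        _ = T k * (qb m k + T ((m:ℤ)+1-k) * qb m (k-1))
            + (qb m (k-1) + T ((m:ℤ)+1-(k-1)) * qb m (k-1-1)) := by
              rw [qb_pascalB m k, qb_pascalB m (k-1)]
        _ = (T k * qb m k + qb m (k-1))
            + T ((m:ℤ)+1+1-k) * (T (k-1) * qb m (k-1) + qb m (k-1-1)) := by
              have h3 : (T ((m:ℤ)+1+1-k) : LaurentPolynomial ℤ) * T (k-1) = T k * T ((m:ℤ)+1-k) := by
                rw [h1, h2]
              have h4 : ((m:ℤ)+1-(k-1)) = (m:ℤ)+1+1-k := by ring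
              rw [h4]
              linear_combination qb m (k-1) * h3.symm
        _ = qb (m+1) k + T ((m:ℤ)+1+1-k) * qb (m+1) (k-1) := by rw [qb_succ m k, qb_succ m (k-1)]
        _ = qb (m+1) k + T ((↑(m+1):ℤ)+1-k) * qb (m+1) (k-1) := by push_cast; ring_nf

lemma qb_symm : ∀ (m : ℕ) (k : ℤ), qb m k = qb m ((m:ℤ) - k)
  | 0, k => by
      rcases eq_or_ne k 0 with rfl | h0
      · simp
      · rw [qb_zero_s8, qb_zero_s8, if_neg h0, if_neg (by push_cast; omega)]
  | (m+1), k => by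
      rw [qb_succ m k, qb_pascalB m ((↑(m+1):ℤ) - k)]
      have e1 : (↑(m+1):ℤ) - k - 1 = (m:ℤ) - k := by push_cast; ring
      have e2 : ((m:ℤ)+1-((↑(m+1):ℤ) - k)) = k := by push_cast; ring
      rw [e1, e2, ← qb_symm m k]
      have e3 : (m:ℤ) - ((↑(m+1):ℤ) - k) = k - 1 := by push_cast; ring
      rw [show qb m ((↑(m+1):ℤ) - k) = qb m (k-1) by rw [qb_symm m ((↑(m+1):ℤ) - k), e3]]
      ring

lemma qb_cross (m : ℕ) (k : ℤ) :
    (T k - 1) * qb m k = (T ((m:ℤ)+1-k) - 1) * qb m (k-1) := by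
  have := (qb_succ m k).symm.trans (qb_pascalB m k)
  linear_combination this

open Function

-- kit
lemma finsum_flip (f : ℤ → LaurentPolynomial ℤ) (c : ℤ) : ∑ᶠ j, f (c - j) = ∑ᶠ j, f j :=
  finsum_comp_equiv (Equiv.subLeft c)

lemma finsum_shift (f : ℤ → LaurentPolynomial ℤ) (c : ℤ) : ∑ᶠ j, f (j + c) = ∑ᶠ j, f j :=
  finsum_comp_equiv (Equiv.addRight c)

lemma eq_zero_of_eq_neg {x : LaurentPolynomial ℤ} (h : x = -x) : x = 0 := by
  refine LaurentPolynomial.ext fun a => ?_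
  have h1 : x.coeff a = -(x.coeff a) := congrArg (fun y : LaurentPolynomial ℤ => y.coeff a) h
  have h2 : x.coeff a = 0 := by omega
  simpa using h2

lemma T_congr {a b : ℤ} (h : a = b) : (T a : LaurentPolynomial ℤ) = T b := by rw [h]

lemma Tmul {a b c : ℤ} (h : a + b = c) (x : LaurentPolynomial ℤ) :
    (T a : LaurentPolynomial ℤ) * (T b * x) = T c * x := by rw [← mul_assoc, ← T_add, h]

lemma supp_add {f g : ℤ → LaurentPolynomial ℤ} (hf : (Function.support f).Finite)
    (hg : (Function.support g).Finite) : (Function.support fun j => f j + g j).Finite := by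
  refine (hf.union hg).subset fun j hj => ?_
  by_contra hc
  simp only [Set.mem_union, Function.mem_support, not_or, not_not] at hc
  simp only [Function.mem_support] at hj
  exact hj (by rw [hc.1, hc.2, add_zero])

lemma supp_fin {f : ℤ → LaurentPolynomial ℤ} (lo hi : ℤ) (h : ∀ j, j < lo ∨ hi < j → f j = 0) :
    (Function.support f).Finite := by
  apply Set.Finite.subset (Set.finite_Icc lo hi)
  intro j hj
  simp only [Function.mem_support] at hj
  by_contra hmem
  simp only [Set.mem_Icc, not_and_or, not_le] at hmem
  exact hj (h j (by omega))

noncomputable def sg (j : ℤ) : LaurentPolynomial ℤ := (-1)^j.natAbs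

lemma sg_eq (j : ℤ) : sg j = if j % 2 = 0 then 1 else -1 := by
  unfold sg
  rcases Int.even_or_odd j with h | h
  · rw [if_pos (Int.even_iff.mp h), Even.neg_one_pow (Int.natAbs_even.mpr h)]
  · rw [if_neg (by have := Int.odd_iff.mp h; omega), Odd.neg_one_pow (Int.natAbs_odd.mpr h)]

lemma sg_congr {i j : ℤ} (h : (i - j) % 2 = 0) : sg i = sg j := by
  rw [sg_eq, sg_eq]
  split_ifs with h1 h2 h2 <;> first | rfl | (exfalso; omega)

lemma sg_flip {i j : ℤ} (h : (i - j) % 2 ≠ 0) : sg i = - sg j := by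
  rw [sg_eq, sg_eq]
  split_ifs with h1 h2 h2 <;> first | (exfalso; omega) | norm_num

lemma key1 (j : ℤ) : 2 * (j * (5*j - 1) / 2) = j * (5*j - 1) := by
  apply Int.mul_ediv_cancel'
  rcases Int.even_or_odd j with h | h
  · exact dvd_mul_of_dvd_left h.two_dvd _
  · rcases h with ⟨m, hm⟩
    exact dvd_mul_of_dvd_right (Even.two_dvd ⟨5*m + 2, by omega⟩) _

lemma key2 (j : ℤ) : 2 * (j * (5*j + 3) / 2) = j * (5*j + 3) := by
  apply Int.mul_ediv_cancel'
  rcases Int.even_or_odd j with h | h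
  · exact dvd_mul_of_dvd_left h.two_dvd _
  · rcases h with ⟨m, hm⟩
    exact dvd_mul_of_dvd_right (Even.two_dvd ⟨5*m + 4, by omega⟩) _

example (n j : ℤ) : (1-j) * (5*(1-j) - 1) / 2 + (n+1-2*(1-j)) = j * (5*j-1)/2 + (n+1-2*j) := by
  linarith [key1 j, key1 (1-j)]
example (n j : ℤ) : (-1-j) * (5*(-1-j) + 3) / 2 + (2*n+4+4*(-1-j)) = j * (5*j+3)/2 + (2*n+1-2*j) := by
  linarith [key2 j, key2 (-1-j)]

noncomputable def sa (n : ℕ) : LaurentPolynomial ℤ := ∑ᶠ k : ℤ, T (k^2) * qb n k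
noncomputable def sb (n : ℕ) : LaurentPolynomial ℤ := ∑ᶠ k : ℤ, T (k^2 + k) * qb n k
noncomputable def SA (n : ℕ) : LaurentPolynomial ℤ :=
  ∑ᶠ j : ℤ, sg j * T (j*(5*j-1)/2) * qb (2*n) ((n:ℤ) - 2*j)
noncomputable def SB (n : ℕ) : LaurentPolynomial ℤ :=
  ∑ᶠ j : ℤ, sg j * T (j*(5*j+3)/2) * qb (2*n+1) ((n:ℤ) - 2*j)

lemma sa_zero : sa 0 = 1 := by
  have h : ∀ k : ℤ, k ≠ 0 → T (k^2) * qb 0 k = 0 := fun k hk => by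
    rw [qb_zero_s8, if_neg hk, mul_zero]
  rw [sa, finsum_eq_single _ 0 h]
  norm_num [qb_zero_s8]

lemma sb_zero : sb 0 = 1 := by
  have h : ∀ k : ℤ, k ≠ 0 → T (k^2 + k) * qb 0 k = 0 := fun k hk => by
    rw [qb_zero_s8, if_neg hk, mul_zero]
  rw [sb, finsum_eq_single _ 0 h]
  norm_num [qb_zero_s8]

lemma SA_zero : SA 0 = 1 := by
  have h : ∀ j : ℤ, j ≠ 0 → sg j * T (j*(5*j-1)/2) * qb (2*0) ((0:ℤ) - 2*j) = 0 :=
    fun j hj => mul_eq_zero_of_right _ (qb_eq_zero _ (by omega))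
  rw [SA]
  simp only [Nat.cast_zero]
  rw [finsum_eq_single _ 0 h]
  norm_num [qb_zero_s8, sg]

lemma SB_zero : SB 0 = 1 := by
  have h : ∀ j : ℤ, j ≠ 0 → sg j * T (j*(5*j+3)/2) * qb (2*0+1) ((0:ℤ) - 2*j) = 0 :=
    fun j hj => mul_eq_zero_of_right _ (qb_eq_zero _ (by omega))
  rw [SB]
  simp only [Nat.cast_zero]
  rw [finsum_eq_single _ 0 h]
  norm_num [qb_succ, qb_zero_s8, sg]

lemma L1 (n : ℕ) : sa (n+1) = sa n + T ((n:ℤ)+1) * sb n := by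
  have h1 : (support fun k : ℤ => T (k^2) * qb n k).Finite :=
    supp_fin 0 n fun k hk => mul_eq_zero_of_right _ (qb_eq_zero _ (by omega))
  have h2 : (support fun k : ℤ => T (k^2 + ((n:ℤ)+1-k)) * qb n (k-1)).Finite :=
    supp_fin 0 ((n:ℤ)+2) fun k hk => mul_eq_zero_of_right _ (qb_eq_zero _ (by omega))
  have h3 : (support fun k : ℤ => T (k^2 + k) * qb n k).Finite :=
    supp_fin 0 n fun k hk => mul_eq_zero_of_right _ (qb_eq_zero _ (by omega))
  calc sa (n+1) = ∑ᶠ k : ℤ, (T (k^2) * qb n k + T (k^2 + ((n:ℤ)+1-k)) * qb n (k-1)) := by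
        refine finsum_congr fun k => ?_
        show T (k^2) * qb (n+1) k = _
        rw [qb_pascalB n k, mul_add, ← mul_assoc, ← T_add]
    _ = (∑ᶠ k : ℤ, T (k^2) * qb n k) + ∑ᶠ k : ℤ, T (k^2 + ((n:ℤ)+1-k)) * qb n (k-1) :=
        finsum_add_distrib h1 h2
    _ = sa n + T ((n:ℤ)+1) * sb n := by
        congr 1
        rw [← finsum_shift (fun k : ℤ => T (k^2 + ((n:ℤ)+1-k)) * qb n (k-1)) 1,
            sb, mul_finsum _ _]
        refine finsum_congr fun k => ?_
        show T ((k+1)^2 + ((n:ℤ)+1-(k+1))) * qb n (k+1-1) = T ((n:ℤ)+1) * (T (k^2 + k) * qb n k)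
        rw [add_sub_cancel_right, ← mul_assoc, ← T_add,
          T_congr (show ((n:ℤ)+1) + (k^2+k) = (k+1)^2 + ((n:ℤ)+1-(k+1)) by ring)]

lemma keyH (n : ℕ) : (∑ᶠ k : ℤ, T ((k+1)^2) * qb n k) = sa (n+1) - sb n := by
  have h3 : (support fun k : ℤ => T (k^2 + k) * qb n k).Finite :=
    supp_fin 0 n fun k hk => mul_eq_zero_of_right _ (qb_eq_zero _ (by omega))
  have h4 : (support fun k : ℤ => T (k^2) * qb n (k-1)).Finite :=
    supp_fin 0 ((n:ℤ)+2) fun k hk => mul_eq_zero_of_right _ (qb_eq_zero _ (by omega))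
  have expand : sa (n+1) = sb n + ∑ᶠ k : ℤ, T ((k+1)^2) * qb n k := by
    calc sa (n+1) = ∑ᶠ k : ℤ, (T (k^2 + k) * qb n k + T (k^2) * qb n (k-1)) := by
          refine finsum_congr fun k => ?_
          show T (k^2) * qb (n+1) k = _
          rw [qb_succ n k, mul_add, Tmul (show (k^2 : ℤ) + k = k^2 + k by ring)]
      _ = (∑ᶠ k : ℤ, T (k^2+k) * qb n k) + ∑ᶠ k : ℤ, T (k^2) * qb n (k-1) :=
          finsum_add_distrib h3 h4
      _ = sb n + ∑ᶠ k : ℤ, T ((k+1)^2) * qb n k := by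
          congr 1
          rw [← finsum_shift (fun k : ℤ => T (k^2) * qb n (k-1)) 1]
          refine finsum_congr fun k => ?_
          show T ((k+1)^2) * qb n (k+1-1) = _
          rw [add_sub_cancel_right]
  linear_combination -expand

lemma L2 (n : ℕ) : sb (n+1) = sb n + T ((n:ℤ)+1) * (sa (n+1) - sb n) := by
  rw [← keyH n]
  have h3 : (support fun k : ℤ => T (k^2+k) * qb n k).Finite :=
    supp_fin 0 n fun k hk => mul_eq_zero_of_right _ (qb_eq_zero _ (by omega))
  have h5 : (support fun k : ℤ => T (k^2 + k + ((n:ℤ)+1-k)) * qb n (k-1)).Finite :=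
    supp_fin 0 ((n:ℤ)+2) fun k hk => mul_eq_zero_of_right _ (qb_eq_zero _ (by omega))
  have h6 : (support fun k : ℤ => T ((k+1)^2) * qb n k).Finite :=
    supp_fin 0 n fun k hk => mul_eq_zero_of_right _ (qb_eq_zero _ (by omega))
  calc sb (n+1) = ∑ᶠ k : ℤ, (T (k^2+k) * qb n k + T (k^2 + k + ((n:ℤ)+1-k)) * qb n (k-1)) := by
        refine finsum_congr fun k => ?_
        show T (k^2+k) * qb (n+1) k = _
        rw [qb_pascalB n k, mul_add, ← mul_assoc, ← T_add]
    _ = (∑ᶠ k : ℤ, T (k^2+k) * qb n k) + ∑ᶠ k : ℤ, T (k^2 + k + ((n:ℤ)+1-k)) * qb n (k-1) :=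
        finsum_add_distrib h3 h5
    _ = sb n + T ((n:ℤ)+1) * ∑ᶠ k : ℤ, T ((k+1)^2) * qb n k := by
        congr 1
        rw [← finsum_shift (fun k : ℤ => T (k^2 + k + ((n:ℤ)+1-k)) * qb n (k-1)) 1,
            mul_finsum _ _]
        refine finsum_congr fun k => ?_
        show T ((k+1)^2 + (k+1) + ((n:ℤ)+1-(k+1))) * qb n (k+1-1) = T ((n:ℤ)+1) * (T ((k+1)^2) * qb n k)
        rw [add_sub_cancel_right, ← mul_assoc, ← T_add,
          T_congr (show ((n:ℤ)+1) + (k+1)^2 = (k+1)^2 + (k+1) + ((n:ℤ)+1-(k+1)) by ring)]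

lemma pointR1 (m : ℕ) (u : ℤ) :
    qb (2*m+2) (u+1) = qb (2*m) u + T (2*(m:ℤ)+1-u) * qb (2*m+1) u
      + T (u+1) * qb (2*m) (u+1) := by
  rw [show (2*m+2 : ℕ) = (2*m+1)+1 from rfl, qb_pascalB (2*m+1) (u+1),
      qb_pascalB (2*m) (u+1), add_sub_cancel_right, qb_pascalB (2*m) u]
  rw [show ((2*m:ℕ):ℤ)+1-(u+1) = 2*(m:ℤ)-u by push_cast; ring,
      show ((2*m+1:ℕ):ℤ)+1-(u+1) = 2*(m:ℤ)+1-u by push_cast; ring,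
      show ((2*m:ℕ):ℤ)+1-u = 2*(m:ℤ)+1-u by push_cast; ring]
  have hc := qb_cross (2*m) (u+1)
  rw [add_sub_cancel_right, show ((2*m:ℕ):ℤ)+1-(u+1) = 2*(m:ℤ)-u by push_cast; ring] at hc
  linear_combination -hc

lemma Szero (n : ℕ) :
    (∑ᶠ j : ℤ, sg j * T (j*(5*j-1)/2 + ((n:ℤ)-2*j+1)) * qb (2*n) ((n:ℤ)-2*j+1)) = 0 := by
  apply eq_zero_of_eq_neg
  conv_lhs => rw [← finsum_flip
    (fun j : ℤ => sg j * T (j*(5*j-1)/2 + ((n:ℤ)-2*j+1)) * qb (2*n) ((n:ℤ)-2*j+1)) 1]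
  rw [← finsum_neg_distrib]
  refine finsum_congr fun j => ?_
  show sg (1-j) * T ((1-j)*(5*(1-j)-1)/2 + ((n:ℤ)-2*(1-j)+1)) * qb (2*n) ((n:ℤ)-2*(1-j)+1)
      = -(sg j * T (j*(5*j-1)/2 + ((n:ℤ)-2*j+1)) * qb (2*n) ((n:ℤ)-2*j+1))
  rw [sg_flip (show ((1-j) - j) % 2 ≠ 0 by omega),
      T_congr (show (1-j)*(5*(1-j)-1)/2 + ((n:ℤ)-2*(1-j)+1) = j*(5*j-1)/2 + ((n:ℤ)-2*j+1) by
        linarith [key1 j, key1 (1-j)]),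
      qb_symm (2*n) ((n:ℤ)-2*(1-j)+1),
      show ((2*n:ℕ):ℤ) - ((n:ℤ)-2*(1-j)+1) = (n:ℤ)-2*j+1 by push_cast; ring]
  ring

lemma R1 (n : ℕ) : SA (n+1) = SA n + T ((n:ℤ)+1) * SB n := by
  have hA : (support fun j : ℤ => sg j * T (j*(5*j-1)/2) * qb (2*n) ((n:ℤ)-2*j)).Finite :=
    supp_fin (-(n:ℤ)-5) ((n:ℤ)+5) fun j hj => mul_eq_zero_of_right _ (qb_eq_zero _ (by omega))
  have hB : (support fun j : ℤ => sg j * T (j*(5*j+3)/2) * qb (2*n+1) ((n:ℤ)-2*j)).Finite :=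
    supp_fin (-(n:ℤ)-5) ((n:ℤ)+5) fun j hj => mul_eq_zero_of_right _ (qb_eq_zero _ (by omega))
  have hB' : (support fun j : ℤ =>
      T ((n:ℤ)+1) * (sg j * T (j*(5*j+3)/2) * qb (2*n+1) ((n:ℤ)-2*j))).Finite :=
    supp_fin (-(n:ℤ)-5) ((n:ℤ)+5) fun j hj =>
      mul_eq_zero_of_right _ (mul_eq_zero_of_right _ (qb_eq_zero _ (by omega)))
  have hS : (support fun j : ℤ =>
      sg j * T (j*(5*j-1)/2 + ((n:ℤ)-2*j+1)) * qb (2*n) ((n:ℤ)-2*j+1)).Finite :=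
    supp_fin (-(n:ℤ)-5) ((n:ℤ)+5) fun j hj => mul_eq_zero_of_right _ (qb_eq_zero _ (by omega))
  calc SA (n+1) = ∑ᶠ j : ℤ, (sg j * T (j*(5*j-1)/2) * qb (2*n) ((n:ℤ)-2*j)
        + T ((n:ℤ)+1) * (sg j * T (j*(5*j+3)/2) * qb (2*n+1) ((n:ℤ)-2*j))
        + sg j * T (j*(5*j-1)/2 + ((n:ℤ)-2*j+1)) * qb (2*n) ((n:ℤ)-2*j+1)) := by
        refine finsum_congr fun j => ?_
        show sg j * T (j*(5*j-1)/2) * qb (2*(n+1)) ((↑(n+1):ℤ) - 2*j) = _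
        rw [show ((↑(n+1):ℤ) - 2*j) = ((n:ℤ) - 2*j) + 1 by push_cast; ring,
            show (2*(n+1) : ℕ) = 2*n+2 by ring]
        have P := pointR1 n ((n:ℤ) - 2*j)
        have f1 : (T ((n:ℤ)+1) : LaurentPolynomial ℤ) * T (j*(5*j+3)/2)
            = T (j*(5*j-1)/2) * T (2*(n:ℤ)+1-((n:ℤ)-2*j)) := by
          rw [← T_add, ← T_add]; exact T_congr (by linarith [key1 j, key2 j])
        have f2 : (T (j*(5*j-1)/2) : LaurentPolynomial ℤ) * T (((n:ℤ)-2*j)+1)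
            = T (j*(5*j-1)/2 + ((n:ℤ)-2*j+1)) := Tm (by ring)
        linear_combination (sg j * T (j*(5*j-1)/2)) * P
          - sg j * qb (2*n+1) ((n:ℤ)-2*j) * f1 + sg j * qb (2*n) ((n:ℤ)-2*j+1) * f2
    _ = SA n + T ((n:ℤ)+1) * SB n := by
        rw [finsum_add_distrib (supp_add hA hB') hS, finsum_add_distrib hA hB', Szero n,
            add_zero, ← mul_finsum _ _]
        rfl

lemma pointR2 (m : ℕ) (u : ℤ) :
    qb (2*m+3) (u+1) + T ((m:ℤ)+1) * qb (2*m+1) u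
      = qb (2*m+1) u + T (u+1) * qb (2*m+2) (u+1)
        + (T (2*(m:ℤ)+2-u) + T ((m:ℤ)+1) - T (2*(m:ℤ)+2)) * qb (2*m+1) u
        + T (4*(m:ℤ)+4-2*u) * qb (2*m+1) (u-1) := by
  rw [show (2*m+3 : ℕ) = (2*m+2)+1 from rfl, qb_pascalB (2*m+2) (u+1), add_sub_cancel_right,
      show (2*m+2 : ℕ) = (2*m+1)+1 from rfl, qb_pascalB (2*m+1) (u+1), add_sub_cancel_right,
      qb_pascalB (2*m+1) u]
  rw [show ((2*m+2:ℕ):ℤ)+1-(u+1) = 2*(m:ℤ)+2-u by push_cast; ring,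
      show ((2*m+1:ℕ):ℤ)+1-(u+1) = 2*(m:ℤ)+1-u by push_cast; ring,
      show ((2*m+1:ℕ):ℤ)+1-u = 2*(m:ℤ)+2-u by push_cast; ring]
  have hc := qb_cross (2*m+1) (u+1)
  rw [add_sub_cancel_right, show ((2*m+1:ℕ):ℤ)+1-(u+1) = 2*(m:ℤ)+1-u by push_cast; ring] at hc
  have e1 : (T (u+1) : LaurentPolynomial ℤ) * T (2*(m:ℤ)+1-u) = T (2*(m:ℤ)+2) := Tm (by ring)
  have e2 : (T (2*(m:ℤ)+2-u) : LaurentPolynomial ℤ) * T (2*(m:ℤ)+2-u) = T (4*(m:ℤ)+4-2*u) :=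
    Tm (by ring)
  linear_combination (-1 : LaurentPolynomial ℤ) * hc - qb (2*m+1) u * e1 + qb (2*m+1) (u-1) * e2

lemma pointR2b (m : ℕ) (u : ℤ) :
    (T (2*(m:ℤ)+2-u) + T ((m:ℤ)+1) - T (2*(m:ℤ)+2) - T ((m:ℤ)+1+u)) * qb (2*m+1) u
      = (T (2*(m:ℤ)+2-u) + T ((m:ℤ)+1) - T (4*(m:ℤ)+4-2*u) - T (3*(m:ℤ)+3-u))
          * qb (2*m+1) (u-1) := by
  have hc := qb_cross (2*m+1) u
  rw [show ((2*m+1:ℕ):ℤ)+1-u = 2*(m:ℤ)+2-u by push_cast; ring] at hc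
  have e1 : (T (2*(m:ℤ)+2-u) : LaurentPolynomial ℤ) * T u = T (2*(m:ℤ)+2) := Tm (by ring)
  have e2 : (T ((m:ℤ)+1) : LaurentPolynomial ℤ) * T u = T ((m:ℤ)+1+u) := Tm (by ring)
  have e3 : (T (2*(m:ℤ)+2-u) : LaurentPolynomial ℤ) * T (2*(m:ℤ)+2-u) = T (4*(m:ℤ)+4-2*u) :=
    Tm (by ring)
  have e4 : (T ((m:ℤ)+1) : LaurentPolynomial ℤ) * T (2*(m:ℤ)+2-u) = T (3*(m:ℤ)+3-u) :=
    Tm (by ring)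
  linear_combination (-(T (2*(m:ℤ)+2-u) + T ((m:ℤ)+1))) * hc
    + qb (2*m+1) u * (e1 + e2) - qb (2*m+1) (u-1) * (e3 + e4)

lemma Rzero (n : ℕ) :
    (∑ᶠ j : ℤ, sg j * ((T (j*(5*j+3)/2 + ((n:ℤ)+2+2*j)) + T (j*(5*j+3)/2 + ((n:ℤ)+1))
        - T (j*(5*j+3)/2 + (2*(n:ℤ)+2)) - T (j*(5*j+3)/2 + (2*(n:ℤ)+1-2*j)))
        * qb (2*n+1) ((n:ℤ)-2*j))) = 0 := by
  have step1 : ∀ j : ℤ, sg j * ((T (j*(5*j+3)/2 + ((n:ℤ)+2+2*j)) + T (j*(5*j+3)/2 + ((n:ℤ)+1))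
        - T (j*(5*j+3)/2 + (2*(n:ℤ)+2)) - T (j*(5*j+3)/2 + (2*(n:ℤ)+1-2*j)))
        * qb (2*n+1) ((n:ℤ)-2*j))
      = sg j * ((T (j*(5*j+3)/2 + ((n:ℤ)+2+2*j)) + T (j*(5*j+3)/2 + ((n:ℤ)+1))
        - T (j*(5*j+3)/2 + (2*(n:ℤ)+4+4*j)) - T (j*(5*j+3)/2 + (2*(n:ℤ)+3+2*j)))
        * qb (2*n+1) (((n:ℤ)-2*j)-1)) := by
    intro j
    have P := pointR2b n ((n:ℤ)-2*j)
    have f1 : (T (j*(5*j+3)/2) : LaurentPolynomial ℤ) * T (2*(n:ℤ)+2-((n:ℤ)-2*j))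
        = T (j*(5*j+3)/2 + ((n:ℤ)+2+2*j)) := by rw [← T_add]; exact T_congr (by ring)
    have f2 : (T (j*(5*j+3)/2) : LaurentPolynomial ℤ) * T ((n:ℤ)+1)
        = T (j*(5*j+3)/2 + ((n:ℤ)+1)) := Tm rfl
    have f3 : (T (j*(5*j+3)/2) : LaurentPolynomial ℤ) * T (2*(n:ℤ)+2)
        = T (j*(5*j+3)/2 + (2*(n:ℤ)+2)) := Tm rfl
    have f4 : (T (j*(5*j+3)/2) : LaurentPolynomial ℤ) * T ((n:ℤ)+1+((n:ℤ)-2*j))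
        = T (j*(5*j+3)/2 + (2*(n:ℤ)+1-2*j)) := by rw [← T_add]; exact T_congr (by ring)
    have f5 : (T (j*(5*j+3)/2) : LaurentPolynomial ℤ) * T (4*(n:ℤ)+4-2*((n:ℤ)-2*j))
        = T (j*(5*j+3)/2 + (2*(n:ℤ)+4+4*j)) := by rw [← T_add]; exact T_congr (by ring)
    have f6 : (T (j*(5*j+3)/2) : LaurentPolynomial ℤ) * T (3*(n:ℤ)+3-((n:ℤ)-2*j))
        = T (j*(5*j+3)/2 + (2*(n:ℤ)+3+2*j)) := by rw [← T_add]; exact T_congr (by ring)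
    linear_combination (sg j * T (j*(5*j+3)/2)) * P
      + sg j * qb (2*n+1) ((n:ℤ)-2*j) * (f3 + f4 - f1 - f2)
      + sg j * qb (2*n+1) (((n:ℤ)-2*j)-1) * (f1 + f2 - f5 - f6)
  apply eq_zero_of_eq_neg
  calc (∑ᶠ j : ℤ, sg j * ((T (j*(5*j+3)/2 + ((n:ℤ)+2+2*j)) + T (j*(5*j+3)/2 + ((n:ℤ)+1))
        - T (j*(5*j+3)/2 + (2*(n:ℤ)+2)) - T (j*(5*j+3)/2 + (2*(n:ℤ)+1-2*j)))
        * qb (2*n+1) ((n:ℤ)-2*j)))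
      = ∑ᶠ j : ℤ, sg j * ((T (j*(5*j+3)/2 + ((n:ℤ)+2+2*j)) + T (j*(5*j+3)/2 + ((n:ℤ)+1))
        - T (j*(5*j+3)/2 + (2*(n:ℤ)+4+4*j)) - T (j*(5*j+3)/2 + (2*(n:ℤ)+3+2*j)))
        * qb (2*n+1) (((n:ℤ)-2*j)-1)) := finsum_congr step1
    _ = ∑ᶠ j : ℤ, (fun i : ℤ => sg i * ((T (i*(5*i+3)/2 + ((n:ℤ)+2+2*i)) + T (i*(5*i+3)/2 + ((n:ℤ)+1))
        - T (i*(5*i+3)/2 + (2*(n:ℤ)+4+4*i)) - T (i*(5*i+3)/2 + (2*(n:ℤ)+3+2*i)))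
        * qb (2*n+1) (((n:ℤ)-2*i)-1))) (-1 - j) := (finsum_flip _ (-1)).symm
    _ = ∑ᶠ j : ℤ, -(sg j * ((T (j*(5*j+3)/2 + ((n:ℤ)+2+2*j)) + T (j*(5*j+3)/2 + ((n:ℤ)+1))
        - T (j*(5*j+3)/2 + (2*(n:ℤ)+2)) - T (j*(5*j+3)/2 + (2*(n:ℤ)+1-2*j)))
        * qb (2*n+1) ((n:ℤ)-2*j))) := by
        refine finsum_congr fun j => ?_
        show sg (-1-j) * ((T ((-1-j)*(5*(-1-j)+3)/2 + ((n:ℤ)+2+2*(-1-j)))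
            + T ((-1-j)*(5*(-1-j)+3)/2 + ((n:ℤ)+1))
            - T ((-1-j)*(5*(-1-j)+3)/2 + (2*(n:ℤ)+4+4*(-1-j)))
            - T ((-1-j)*(5*(-1-j)+3)/2 + (2*(n:ℤ)+3+2*(-1-j))))
            * qb (2*n+1) (((n:ℤ)-2*(-1-j))-1)) = _
        rw [sg_flip (show ((-1-j) - j) % 2 ≠ 0 by omega),
            T_congr (show (-1-j)*(5*(-1-j)+3)/2 + ((n:ℤ)+2+2*(-1-j))
              = j*(5*j+3)/2 + ((n:ℤ)+1) by linarith [key2 j, key2 (-1-j)]),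
            T_congr (show (-1-j)*(5*(-1-j)+3)/2 + ((n:ℤ)+1)
              = j*(5*j+3)/2 + ((n:ℤ)+2+2*j) by linarith [key2 j, key2 (-1-j)]),
            T_congr (show (-1-j)*(5*(-1-j)+3)/2 + (2*(n:ℤ)+4+4*(-1-j))
              = j*(5*j+3)/2 + (2*(n:ℤ)+1-2*j) by linarith [key2 j, key2 (-1-j)]),
            T_congr (show (-1-j)*(5*(-1-j)+3)/2 + (2*(n:ℤ)+3+2*(-1-j))
              = j*(5*j+3)/2 + (2*(n:ℤ)+2) by linarith [key2 j, key2 (-1-j)]),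
            qb_symm (2*n+1) (((n:ℤ)-2*(-1-j))-1),
            show ((2*n+1:ℕ):ℤ) - (((n:ℤ)-2*(-1-j))-1) = (n:ℤ)-2*j by push_cast; ring]
        ring
    _ = -(∑ᶠ j : ℤ, sg j * ((T (j*(5*j+3)/2 + ((n:ℤ)+2+2*j)) + T (j*(5*j+3)/2 + ((n:ℤ)+1))
        - T (j*(5*j+3)/2 + (2*(n:ℤ)+2)) - T (j*(5*j+3)/2 + (2*(n:ℤ)+1-2*j)))
        * qb (2*n+1) ((n:ℤ)-2*j))) := finsum_neg_distrib _

lemma R2 (n : ℕ) : SB (n+1) + T ((n:ℤ)+1) * SB n = SB n + T ((n:ℤ)+1) * SA (n+1) := by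
  have hY : (support fun j : ℤ => sg j * T (j*(5*j+3)/2) * qb (2*n+1) ((n:ℤ)-2*j)).Finite :=
    supp_fin (-(n:ℤ)-5) ((n:ℤ)+5) fun j hj => mul_eq_zero_of_right _ (qb_eq_zero _ (by omega))
  have hBf1 : (support fun j : ℤ =>
      sg j * T (j*(5*j+3)/2) * qb (2*(n+1)+1) ((↑(n+1):ℤ) - 2*j)).Finite :=
    supp_fin (-(n:ℤ)-5) ((n:ℤ)+5) fun j hj => mul_eq_zero_of_right _ (qb_eq_zero _ (by omega))
  have hTB : (support fun j : ℤ =>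
      T ((n:ℤ)+1) * (sg j * T (j*(5*j+3)/2) * qb (2*n+1) ((n:ℤ)-2*j))).Finite :=
    supp_fin (-(n:ℤ)-5) ((n:ℤ)+5) fun j hj =>
      mul_eq_zero_of_right _ (mul_eq_zero_of_right _ (qb_eq_zero _ (by omega)))
  have hX' : (support fun j : ℤ =>
      sg j * T (j*(5*j-1)/2) * qb (2*n+2) (((n:ℤ)-2*j)+1)).Finite :=
    supp_fin (-(n:ℤ)-5) ((n:ℤ)+5) fun j hj => mul_eq_zero_of_right _ (qb_eq_zero _ (by omega))
  have hX : (support fun j : ℤ =>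
      T ((n:ℤ)+1) * (sg j * T (j*(5*j-1)/2) * qb (2*n+2) (((n:ℤ)-2*j)+1))).Finite :=
    supp_fin (-(n:ℤ)-5) ((n:ℤ)+5) fun j hj =>
      mul_eq_zero_of_right _ (mul_eq_zero_of_right _ (qb_eq_zero _ (by omega)))
  have hG1 : (support fun j : ℤ =>
      sg j * ((T (j*(5*j+3)/2 + ((n:ℤ)+2+2*j)) + T (j*(5*j+3)/2 + ((n:ℤ)+1))
        - T (j*(5*j+3)/2 + (2*(n:ℤ)+2))) * qb (2*n+1) ((n:ℤ)-2*j))).Finite :=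
    supp_fin (-(n:ℤ)-5) ((n:ℤ)+5) fun j hj =>
      mul_eq_zero_of_right _ (mul_eq_zero_of_right _ (qb_eq_zero _ (by omega)))
  have hG2 : (support fun j : ℤ =>
      sg j * T (j*(5*j+3)/2 + (2*(n:ℤ)+4+4*j)) * qb (2*n+1) (((n:ℤ)-2*j)-1)).Finite :=
    supp_fin (-(n:ℤ)-5) ((n:ℤ)+5) fun j hj => mul_eq_zero_of_right _ (qb_eq_zero _ (by omega))
  have hG3 : (support fun j : ℤ =>
      -(sg j * T (j*(5*j+3)/2 + (2*(n:ℤ)+1-2*j)) * qb (2*n+1) ((n:ℤ)-2*j))).Finite :=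
    supp_fin (-(n:ℤ)-5) ((n:ℤ)+5) fun j hj => by
      rw [qb_eq_zero _ (show (n:ℤ)-2*j < 0 ∨ ((2*n+1:ℕ):ℤ) < (n:ℤ)-2*j by omega), mul_zero,
        neg_zero]
  have hflip : (∑ᶠ j : ℤ, sg j * T (j*(5*j+3)/2 + (2*(n:ℤ)+4+4*j)) * qb (2*n+1) (((n:ℤ)-2*j)-1))
      = ∑ᶠ j : ℤ, -(sg j * T (j*(5*j+3)/2 + (2*(n:ℤ)+1-2*j)) * qb (2*n+1) ((n:ℤ)-2*j)) := by
    rw [← finsum_flip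
      (fun i : ℤ => sg i * T (i*(5*i+3)/2 + (2*(n:ℤ)+4+4*i)) * qb (2*n+1) (((n:ℤ)-2*i)-1)) (-1)]
    refine finsum_congr fun j => ?_
    show sg (-1-j) * T ((-1-j)*(5*(-1-j)+3)/2 + (2*(n:ℤ)+4+4*(-1-j)))
        * qb (2*n+1) (((n:ℤ)-2*(-1-j))-1) = _
    rw [sg_flip (show ((-1-j) - j) % 2 ≠ 0 by omega),
        T_congr (show (-1-j)*(5*(-1-j)+3)/2 + (2*(n:ℤ)+4+4*(-1-j))
          = j*(5*j+3)/2 + (2*(n:ℤ)+1-2*j) by linarith [key2 j, key2 (-1-j)]),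
        qb_symm (2*n+1) (((n:ℤ)-2*(-1-j))-1),
        show ((2*n+1:ℕ):ℤ) - (((n:ℤ)-2*(-1-j))-1) = (n:ℤ)-2*j by push_cast; ring]
    ring
  have hSA : (∑ᶠ j : ℤ, sg j * T (j*(5*j-1)/2) * qb (2*n+2) (((n:ℤ)-2*j)+1)) = SA (n+1) :=
    finsum_congr fun j => by
      rw [show ((n:ℤ)-2*j)+1 = (↑(n+1):ℤ) - 2*j by push_cast; ring,
          show (2*n+2 : ℕ) = 2*(n+1) by ring]
  have d2 : SB n = ∑ᶠ j : ℤ, sg j * T (j*(5*j+3)/2) * qb (2*n+1) ((n:ℤ) - 2*j) := rfl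
  calc SB (n+1) + T ((n:ℤ)+1) * SB n
      = ∑ᶠ j : ℤ, (sg j * T (j*(5*j+3)/2) * qb (2*(n+1)+1) ((↑(n+1):ℤ) - 2*j)
          + T ((n:ℤ)+1) * (sg j * T (j*(5*j+3)/2) * qb (2*n+1) ((n:ℤ)-2*j))) := by
        rw [d2, mul_finsum _ _]
        exact (finsum_add_distrib hBf1 hTB).symm
    _ = ∑ᶠ j : ℤ, (sg j * T (j*(5*j+3)/2) * qb (2*n+1) ((n:ℤ)-2*j)
          + T ((n:ℤ)+1) * (sg j * T (j*(5*j-1)/2) * qb (2*n+2) (((n:ℤ)-2*j)+1))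
          + sg j * ((T (j*(5*j+3)/2 + ((n:ℤ)+2+2*j)) + T (j*(5*j+3)/2 + ((n:ℤ)+1))
              - T (j*(5*j+3)/2 + (2*(n:ℤ)+2))) * qb (2*n+1) ((n:ℤ)-2*j))
          + sg j * T (j*(5*j+3)/2 + (2*(n:ℤ)+4+4*j)) * qb (2*n+1) (((n:ℤ)-2*j)-1)) := by
        refine finsum_congr fun j => ?_
        rw [show (2*(n+1)+1 : ℕ) = 2*n+3 by ring,
            show ((↑(n+1):ℤ) - 2*j) = ((n:ℤ)-2*j)+1 by push_cast; ring]
        have P := pointR2 n ((n:ℤ)-2*j)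
        have f1 : (T (j*(5*j+3)/2) : LaurentPolynomial ℤ) * T (((n:ℤ)-2*j)+1)
            = T ((n:ℤ)+1) * T (j*(5*j-1)/2) := by
          rw [← T_add, ← T_add]; exact T_congr (by linarith [key1 j, key2 j])
        have f2 : (T (j*(5*j+3)/2) : LaurentPolynomial ℤ) * T (2*(n:ℤ)+2-((n:ℤ)-2*j))
            = T (j*(5*j+3)/2 + ((n:ℤ)+2+2*j)) := by rw [← T_add]; exact T_congr (by ring)
        have f3 : (T (j*(5*j+3)/2) : LaurentPolynomial ℤ) * T ((n:ℤ)+1)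
            = T (j*(5*j+3)/2 + ((n:ℤ)+1)) := Tm rfl
        have f4 : (T (j*(5*j+3)/2) : LaurentPolynomial ℤ) * T (2*(n:ℤ)+2)
            = T (j*(5*j+3)/2 + (2*(n:ℤ)+2)) := Tm rfl
        have f5 : (T (j*(5*j+3)/2) : LaurentPolynomial ℤ) * T (4*(n:ℤ)+4-2*((n:ℤ)-2*j))
            = T (j*(5*j+3)/2 + (2*(n:ℤ)+4+4*j)) := by rw [← T_add]; exact T_congr (by ring)
        linear_combination (sg j * T (j*(5*j+3)/2)) * P
          + sg j * qb (2*n+2) (((n:ℤ)-2*j)+1) * f1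
          + sg j * qb (2*n+1) ((n:ℤ)-2*j) * (f2 + f3 - f4)
          + sg j * qb (2*n+1) (((n:ℤ)-2*j)-1) * f5
    _ = SB n + T ((n:ℤ)+1) * SA (n+1)
        + ((∑ᶠ j : ℤ, sg j * ((T (j*(5*j+3)/2 + ((n:ℤ)+2+2*j)) + T (j*(5*j+3)/2 + ((n:ℤ)+1))
            - T (j*(5*j+3)/2 + (2*(n:ℤ)+2))) * qb (2*n+1) ((n:ℤ)-2*j)))
          + ∑ᶠ j : ℤ, sg j * T (j*(5*j+3)/2 + (2*(n:ℤ)+4+4*j)) * qb (2*n+1) (((n:ℤ)-2*j)-1)) := by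
        rw [finsum_add_distrib (supp_add (supp_add hY hX) hG1) hG2,
            finsum_add_distrib (supp_add hY hX) hG1,
            finsum_add_distrib hY hX, ← mul_finsum _ _, hSA, ← d2]
        ring
    _ = SB n + T ((n:ℤ)+1) * SA (n+1) := by
        rw [hflip, ← finsum_add_distrib hG1 hG3,
            finsum_congr (g := fun j : ℤ => sg j * ((T (j*(5*j+3)/2 + ((n:ℤ)+2+2*j))
              + T (j*(5*j+3)/2 + ((n:ℤ)+1)) - T (j*(5*j+3)/2 + (2*(n:ℤ)+2))
              - T (j*(5*j+3)/2 + (2*(n:ℤ)+1-2*j))) * qb (2*n+1) ((n:ℤ)-2*j)))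
              (fun j => by ring),
            Rzero n, add_zero]

lemma main_ind (n : ℕ) : sa n = SA n ∧ sb n = SB n := by
  induction n with
  | zero => exact ⟨by rw [sa_zero, SA_zero], by rw [sb_zero, SB_zero]⟩
  | succ n ih =>
      have h1 : sa (n+1) = SA (n+1) := by rw [L1 n, ih.1, ih.2, ← R1 n]
      refine ⟨h1, ?_⟩
      have h2 := R2 n
      rw [L2 n, ih.2, h1]
      linear_combination -h2

lemma sa_eq_range (n : ℕ) :
    sa n = ∑ k ∈ Finset.range (n+1), T (((k:ℕ):ℤ)^2) * qb n ((k:ℕ):ℤ) := by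
  have d : sa n = ∑ᶠ k : ℤ, T (k^2) * qb n k := rfl
  rw [d, finsum_eq_finset_sum_of_support_subset (fun k : ℤ => T (k^2) * qb n k)
      (s := (Finset.range (n+1)).map ⟨(Nat.cast : ℕ → ℤ), Nat.cast_injective⟩) ?_]
  · rw [Finset.sum_map]
    rfl
  · intro j hj
    simp only [Function.mem_support] at hj
    have h0 : ¬ (j < 0 ∨ (n:ℤ) < j) := fun h => hj (by rw [qb_eq_zero n h, mul_zero])
    push_neg at h0
    simp only [Finset.coe_map, Set.mem_image, Finset.mem_coe, Finset.mem_range,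
      Function.Embedding.coeFn_mk]
    exact ⟨j.toNat, by omega, by omega⟩

theorem stmt8 (n : ℕ) :
    ∑ k ∈ Finset.range (n + 1), q ^ (k ^ 2) * qb n k
      = ∑ᶠ j : ℤ, (-1 : LaurentPolynomial ℤ) ^ j.natAbs * T (j * (5 * j - 1) / 2) *
          qb (2 * n) ((n : ℤ) - 2 * j) := by
  calc ∑ k ∈ Finset.range (n + 1), q ^ (k ^ 2) * qb n k
      = ∑ k ∈ Finset.range (n+1), T (((k:ℕ):ℤ)^2) * qb n ((k:ℕ):ℤ) := by
        refine Finset.sum_congr rfl fun k _ => ?_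
        rw [show (q : LaurentPolynomial ℤ) = T 1 from rfl, T_pow, mul_one,
          T_congr (show ((k^2 : ℕ) : ℤ) = ((k:ℕ):ℤ)^2 by push_cast; ring)]
    _ = sa n := (sa_eq_range n).symm
    _ = SA n := (main_ind n).1
    _ = ∑ᶠ j : ℤ, (-1 : LaurentPolynomial ℤ) ^ j.natAbs * T (j * (5 * j - 1) / 2) *
          qb (2 * n) ((n : ℤ) - 2 * j) := rfl
end
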